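/- For all real α, β ≠ 0, γ, x, all λ ∈ ℕ with λ ≥ 1, and all n ≥ 0: A^{λ,x}_{n+1}(α,β,γ) = γ·A^{λ,x}_n(α,β,γ+α) + x·λ·β · Σ_{k=0}^{n} C(n,k) · A^{1,x}_k(α,β,γ+β+α) · A^{λ,x}_{n-k}(α,β,0). -/

import Mathlib

open Finset

/-- Generalized factorial polynomial `(t|α)_n = ∏_{j=0}^{n-1} (t - jα)`. -/
noncomputable def gfact (t α : ℝ) (n : ℕ) : ℝ := ∏ j ∈ Finset.range n, (t - j * α)

/-- Hsu–Shiue generalized Stirling numbers (explicit formula, β ≠ 0). -/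
noncomputable def HS (n k : ℕ) (α β γ : ℝ) : ℝ :=
  (1 / (β ^ k * (Nat.factorial k : ℝ))) *
    ∑ s ∈ Finset.range (k + 1), (-1 : ℝ) ^ (k - s) * (Nat.choose k s : ℝ) * gfact (β * s + γ) α n

/-- Second-type higher order generalized geometric polynomials. -/
noncomputable def A (lam : ℕ) (x : ℝ) (n : ℕ) (α β γ : ℝ) : ℝ :=
  ∑ k ∈ Finset.range (n + 1),
    (Nat.choose (k + lam - 1) k : ℝ) * (-1 : ℝ) ^ (n + k) * β ^ k * (Nat.factorial k : ℝ) *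
      HS n k α (-β) (-γ) * x ^ k

/-! ### Auxiliary definitions: rising factorial and finite differences -/

/-- Rising factorial with step `α`. -/
noncomputable def rf (α t : ℝ) (n : ℕ) : ℝ := ∏ j ∈ Finset.range n, (t + j * α)

/-- `k`-th finite difference of `f` at `0`. -/
noncomputable def fd (k : ℕ) (f : ℕ → ℝ) : ℝ :=
  ∑ s ∈ Finset.range (k+1), (-1:ℝ)^k * (-1)^s * (k.choose s) * f s

/-- Key quantity: finite difference of the rising factorial along an arithmetic
progression. -/
noncomputable def Dk (α β γ : ℝ) (n k : ℕ) : ℝ := fd k (fun s => rf α (β * s + γ) n)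

lemma rf_succ (α t : ℝ) (n : ℕ) : rf α t (n+1) = t * rf α (t+α) n := by
  unfold rf
  rw [Finset.prod_range_succ']
  simp only [Nat.cast_zero, zero_mul, add_zero]
  rw [mul_comm]
  congr 1
  apply Finset.prod_congr rfl
  intro j _
  push_cast
  ring

lemma rf_succ' (α t : ℝ) (n : ℕ) : rf α t (n+1) = rf α t n * (t + n * α) :=
  Finset.prod_range_succ _ _

lemma fd_zero (f : ℕ → ℝ) : fd 0 f = f 0 := by simp [fd]

lemma fd_sub (k : ℕ) (f g : ℕ → ℝ) : fd k (fun s => f s - g s) = fd k f - fd k g := by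
  unfold fd
  rw [← Finset.sum_sub_distrib]
  apply Finset.sum_congr rfl
  intro s _
  ring

lemma fd_add (k : ℕ) (f g : ℕ → ℝ) : fd k (fun s => f s + g s) = fd k f + fd k g := by
  unfold fd; rw [← Finset.sum_add_distrib]; exact Finset.sum_congr rfl fun s _ => by ring

lemma fd_const_mul (k : ℕ) (c : ℝ) (f : ℕ → ℝ) : fd k (fun s => c * f s) = c * fd k f := by
  unfold fd; rw [Finset.mul_sum]; exact Finset.sum_congr rfl fun s _ => by ring

lemma fd_congr (k : ℕ) {f g : ℕ → ℝ} (h : ∀ s, f s = g s) : fd k f = fd k g := by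
  unfold fd; exact Finset.sum_congr rfl fun s _ => by rw [h]

lemma fd_succ (k : ℕ) (f : ℕ → ℝ) : fd (k+1) f = fd k (fun s => f (s+1)) - fd k f := by
  unfold fd
  rw [Finset.sum_range_succ' (fun s => (-1:ℝ)^(k+1) * (-1)^s * ((k+1).choose s) * f s) (k+1)]
  have h1 : ∀ s ∈ Finset.range (k+1),
      (-1:ℝ)^(k+1) * (-1)^(s+1) * (((k+1).choose (s+1) : ℕ) : ℝ) * f (s+1)
      = (-1:ℝ)^k * (-1)^s * (k.choose s) * f (s+1)
        + (-((-1:ℝ)^k * (-1)^(s+1) * (k.choose (s+1)) * f (s+1))) := by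
    intro s _
    rw [Nat.choose_succ_succ']
    push_cast
    ring
  rw [Finset.sum_congr rfl h1, Finset.sum_add_distrib]
  have h2 : ∑ s ∈ Finset.range (k+1), (-((-1:ℝ)^k * (-1)^(s+1) * (k.choose (s+1)) * f (s+1)))
      = -∑ s ∈ Finset.range (k+1), (-1:ℝ)^k * (-1)^(s+1) * (k.choose (s+1)) * f (s+1) := by
    rw [Finset.sum_neg_distrib]
  rw [h2]
  have h3 : ∑ s ∈ Finset.range (k+1), (-1:ℝ)^k * (-1)^(s+1) * (k.choose (s+1)) * f (s+1)
      = ∑ s ∈ Finset.range (k+2), (-1:ℝ)^k * (-1)^s * (k.choose s) * f s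
        - (-1:ℝ)^k * (-1)^0 * (k.choose 0) * f 0 := by
    rw [Finset.sum_range_succ' (fun s => (-1:ℝ)^k * (-1)^s * (k.choose s) * f s) (k+1)]
    ring
  rw [h3]
  have h4 : ∑ s ∈ Finset.range (k+2), (-1:ℝ)^k * (-1)^s * (k.choose s) * f s
      = ∑ s ∈ Finset.range (k+1), (-1:ℝ)^k * (-1)^s * (k.choose s) * f s := by
    rw [Finset.sum_range_succ]
    simp [Nat.choose_succ_self]
  rw [h4]
  have h5 : (-1:ℝ)^(k+1) * (-1)^0 * (((k+1).choose 0 : ℕ):ℝ) * f 0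
      = -((-1:ℝ)^k * (-1)^0 * ((k.choose 0 : ℕ):ℝ) * f 0) := by
    simp; ring
  rw [h5]
  ring

lemma fd_comp (k1 : ℕ) : ∀ (k2 : ℕ) (f : ℕ → ℝ),
    fd (k1 + k2) f = fd k1 (fun s => fd k2 (fun t => f (s + t))) := by
  induction k1 with
  | zero =>
    intro k2 f
    rw [fd_zero]
    simp
  | succ k ih =>
    intro k2 f
    have : k + 1 + k2 = (k + k2) + 1 := by omega
    rw [this, fd_succ, ih k2 (fun s => f (s+1)), ih k2 f, fd_succ k]
    congr 1
    apply fd_congr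
    intro s
    apply fd_congr
    intro t
    congr 1
    omega

/-- The `k`-th finite difference of a polynomial of degree `< k` vanishes. -/
lemma fd_poly (k : ℕ) : ∀ (d : ℕ) (p : Polynomial ℝ), p.natDegree ≤ d → d < k →
    fd k (fun s => p.eval (s : ℝ)) = 0 := by
  induction k with
  | zero => intro d p _ h; omega
  | succ k ih =>
    intro d p hdeg hdk
    rw [fd_succ]
    set q : Polynomial ℝ := p.comp (Polynomial.X + Polynomial.C 1) - p with hq
    have hqe : ∀ s : ℕ, p.eval ((s:ℝ) + 1) - p.eval (s:ℝ) = q.eval (s:ℝ) := by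
      intro s; simp [hq, Polynomial.eval_comp]
    have step : fd k (fun s => p.eval ((s:ℕ) + 1 : ℝ)) - fd k (fun s => p.eval (s:ℝ))
        = fd k (fun s => q.eval (s:ℝ)) := by
      rw [← fd_sub]
      apply fd_congr
      intro s
      rw [← hqe s]
    have hcast : fd k (fun s => p.eval ((s+1 : ℕ) : ℝ)) = fd k (fun s => p.eval ((s:ℝ) + 1)) := by
      apply fd_congr; intro s; push_cast; ring_nf
    rw [hcast, step]
    by_cases hp : p = 0
    · have : q = 0 := by simp [hq, hp]
      rw [this]
      by_cases hk : k = 0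
      · subst hk; rw [fd_zero]; simp
      · obtain ⟨k', rfl⟩ := Nat.exists_eq_succ_of_ne_zero hk
        apply ih 0 0 (by simp) (by omega)
    · by_cases hq0 : q = 0
      · rw [hq0]
        by_cases hk : k = 0
        · subst hk; rw [fd_zero]; simp
        · obtain ⟨k', rfl⟩ := Nat.exists_eq_succ_of_ne_zero hk
          apply ih 0 0 (by simp) (by omega)
      · have hX : ((Polynomial.X : Polynomial ℝ) + Polynomial.C 1).natDegree = 1 :=
          Polynomial.natDegree_X_add_C 1
        have hXl : ((Polynomial.X : Polynomial ℝ) + Polynomial.C 1).leadingCoeff = 1 :=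
          Polynomial.leadingCoeff_X_add_C 1
        have hcomp_deg : (p.comp (Polynomial.X + Polynomial.C 1)).natDegree = p.natDegree := by
          rw [Polynomial.natDegree_comp, hX, mul_one]
        have hlc : (p.comp (Polynomial.X + Polynomial.C 1)).leadingCoeff = p.leadingCoeff := by
          rw [Polynomial.leadingCoeff_comp (by rw [hX]; exact one_ne_zero), hXl, one_pow, mul_one]
        have hcomp0 : p.comp (Polynomial.X + Polynomial.C 1) ≠ 0 := by
          intro h
          apply hp
          have := hlc
          rw [h] at this
          simpa [Polynomial.leadingCoeff_eq_zero] using this.symm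
        have hdlt : q.degree < p.degree := by
          rw [hq]
          have h2 := Polynomial.degree_sub_lt ?_ hcomp0 hlc
          · rw [Polynomial.degree_eq_natDegree hcomp0, hcomp_deg] at h2
            rwa [Polynomial.degree_eq_natDegree hp]
          · rw [Polynomial.degree_eq_natDegree hcomp0, Polynomial.degree_eq_natDegree hp, hcomp_deg]
        have hnd : q.natDegree < p.natDegree := by
          apply Polynomial.natDegree_lt_natDegree hq0
          rwa [hq] at hdlt ⊢
        by_cases hk : k = 0
        · exfalso
          have : p.natDegree = 0 := by omega
          omega
        · apply ih (d - 1) q (by omega) (by omega)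

lemma rf_is_poly (α β γ : ℝ) (n : ℕ) :
    ∃ p : Polynomial ℝ, p.natDegree ≤ n ∧ ∀ s : ℕ, rf α (β * s + γ) n = p.eval (s : ℝ) := by
  refine ⟨∏ j ∈ Finset.range n, (Polynomial.C β * Polynomial.X + Polynomial.C (γ + (j:ℝ) * α)),
    ?_, ?_⟩
  · refine le_trans (Polynomial.natDegree_prod_le _ _) ?_
    refine le_trans (Finset.sum_le_sum fun j _ => Polynomial.natDegree_linear_le) ?_
    simp
  · intro s
    rw [Polynomial.eval_prod]
    unfold rf
    apply Finset.prod_congr rfl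
    intro j _
    simp only [Polynomial.eval_add, Polynomial.eval_mul, Polynomial.eval_C, Polynomial.eval_X]
    ring

lemma Dk_vanish (α β γ : ℝ) (n k : ℕ) (h : n < k) : Dk α β γ n k = 0 := by
  obtain ⟨p, hp, he⟩ := rf_is_poly α β γ n
  unfold Dk
  rw [fd_congr k he]
  exact fd_poly k n p hp h

/-- Vandermonde-type addition formula for the rising factorial. -/
lemma rf_add (α : ℝ) : ∀ (n : ℕ) (u v : ℝ),
    rf α (u + v) n = ∑ j ∈ Finset.range (n+1), (n.choose j : ℝ) * rf α u j * rf α v (n - j) := by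
  intro n
  induction n with
  | zero => intro u v; simp [rf]
  | succ n ih =>
    intro u v
    have hL : rf α (u+v) (n+1) = (∑ j ∈ Finset.range (n+1), (n.choose j : ℝ) * rf α u j * rf α v (n - j)) * (u + v + n * α) := by
      have : rf α (u+v) (n+1) = rf α (u+v) n * (u + v + n * α) := Finset.prod_range_succ _ _
      rw [this, ih u v]
    rw [hL]
    have expand : (∑ j ∈ Finset.range (n+1), (n.choose j : ℝ) * rf α u j * rf α v (n - j)) * (u + v + n * α)
        = (∑ j ∈ Finset.range (n+1), (n.choose j : ℝ) * rf α u (j+1) * rf α v (n - j))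
          + ∑ j ∈ Finset.range (n+1), (n.choose j : ℝ) * rf α u j * rf α v ((n - j) + 1) := by
      rw [Finset.sum_mul, ← Finset.sum_add_distrib]
      apply Finset.sum_congr rfl
      intro j hj
      have hjn : j ≤ n := Nat.lt_succ_iff.mp (Finset.mem_range.mp hj)
      have h1 : rf α u (j+1) = rf α u j * (u + j * α) := Finset.prod_range_succ _ _
      have h2 : rf α v ((n-j)+1) = rf α v (n-j) * (v + ((n-j : ℕ) : ℝ) * α) :=
        Finset.prod_range_succ _ _
      have h3 : ((n - j : ℕ) : ℝ) = (n : ℝ) - j := by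
        push_cast [Nat.cast_sub hjn]; ring
      rw [h1, h2, h3]
      ring
    rw [expand]
    rw [Finset.sum_range_succ' (fun j => ((n+1).choose j : ℝ) * rf α u j * rf α v (n + 1 - j)) (n+1)]
    have step1 : ∀ j ∈ Finset.range (n+1),
        (((n+1).choose (j+1) : ℕ) : ℝ) * rf α u (j+1) * rf α v (n + 1 - (j+1))
        = (n.choose j : ℝ) * rf α u (j+1) * rf α v (n - j)
          + (n.choose (j+1) : ℝ) * rf α u (j+1) * rf α v (n - j) := by
      intro j hj
      have : n + 1 - (j+1) = n - j := by omega
      rw [this, Nat.choose_succ_succ']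
      push_cast
      ring
    rw [Finset.sum_congr rfl step1, Finset.sum_add_distrib]
    have step2 : ∑ j ∈ Finset.range (n+1), (n.choose (j+1) : ℝ) * rf α u (j+1) * rf α v (n - j)
          + (((n+1).choose 0 : ℕ) : ℝ) * rf α u 0 * rf α v (n + 1 - 0)
        = ∑ j ∈ Finset.range (n+1), (n.choose j : ℝ) * rf α u j * rf α v ((n - j) + 1) := by
      rw [Finset.sum_range_succ (fun j => (n.choose (j+1) : ℝ) * rf α u (j+1) * rf α v (n - j)) n]
      simp only [Nat.choose_succ_self, Nat.cast_zero, zero_mul, mul_zero, add_zero, Nat.choose_zero_right]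
      rw [Finset.sum_range_succ' (fun j => (n.choose j : ℝ) * rf α u j * rf α v ((n - j) + 1)) n]
      have : ∀ j ∈ Finset.range n, (n.choose (j+1) : ℝ) * rf α u (j+1) * rf α v (n - j)
          = (n.choose (j+1) : ℝ) * rf α u (j+1) * rf α v ((n - (j+1)) + 1) := by
        intro j hj
        have : n - j = (n - (j+1)) + 1 := by
          have := Finset.mem_range.mp hj; omega
        rw [this]
      rw [Finset.sum_congr rfl this]
      simp [rf]
    rw [← step2]
    ring

lemma Dk_split (α β γ : ℝ) (n k : ℕ) :
    Dk α β γ (n+1) k = γ * Dk α β (γ+α) n k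
      + fd k (fun s => β * s * rf α (β * s + (γ + α)) n) := by
  unfold Dk
  have h : ∀ s : ℕ, rf α (β * s + γ) (n+1)
      = γ * rf α (β * s + (γ + α)) n + β * s * rf α (β * s + (γ + α)) n := by
    intro s
    rw [rf_succ]
    have : β * (s:ℝ) + γ + α = β * s + (γ + α) := by ring
    rw [this]
    ring
  rw [fd_congr k h, fd_add, fd_const_mul]

lemma Dk_rec_zero (α β γ : ℝ) (n : ℕ) :
    Dk α β γ (n+1) 0 = γ * Dk α β (γ+α) n 0 := by
  rw [Dk_split]
  simp [fd]

lemma Dk_rec (α β γ : ℝ) (n k : ℕ) :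
    Dk α β γ (n+1) (k+1) = γ * Dk α β (γ+α) n (k+1)
      + β * (k+1) * Dk α β (γ+β+α) n k := by
  rw [Dk_split]
  congr 1
  unfold Dk fd
  rw [Finset.sum_range_succ' (fun s => (-1:ℝ)^(k+1) * (-1)^s * ((k+1).choose s) * (β * s * rf α (β * s + (γ + α)) n)) (k+1)]
  simp only [Nat.cast_zero, mul_zero, zero_mul, add_zero]
  rw [Finset.mul_sum]
  apply Finset.sum_congr rfl
  intro s _
  have hch : (((k+1).choose (s+1) : ℕ) : ℝ) * (s+1) = (k+1) * (k.choose s : ℕ) := by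
    have h2 := Nat.add_one_mul_choose_eq k s
    exact_mod_cast h2.symm
  have harg : β * ((s:ℝ)+1) + (γ + α) = β * s + (γ + β + α) := by ring
  calc (-1:ℝ)^(k+1) * (-1)^(s+1) * ((k+1).choose (s+1)) * (β * ((s+1:ℕ):ℝ) * rf α (β * ((s+1:ℕ):ℝ) + (γ + α)) n)
      = ((-1:ℝ)^k * (-1)^s) * ((((k+1).choose (s+1) : ℕ):ℝ) * (((s:ℝ)+1))) * β * rf α (β * ((s:ℝ)+1) + (γ + α)) n := by
        push_cast; ring
    _ = ((-1:ℝ)^k * (-1)^s) * ((k+1) * (k.choose s : ℕ)) * β * rf α (β * (s:ℝ) + (γ + β + α)) n := by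
        rw [hch, harg]
    _ = β * (↑k+1) * ((-1:ℝ)^k * (-1)^s * (k.choose s) * rf α (β * s + (γ+β+α)) n) := by
        push_cast; ring

/-- Hockey stick identity. -/
lemma hockey (l : ℕ) : ∀ m : ℕ, ∑ k ∈ Finset.range (m+1), ((k+l).choose k : ℝ) = ((m+l+1).choose m : ℝ) := by
  intro m
  induction m with
  | zero => simp
  | succ m ih =>
    rw [Finset.sum_range_succ, ih]
    have h0 : m+1+l = m+l+1 := by omega
    have : (m+l+1+1).choose (m+1) = (m+l+1).choose m + (m+l+1).choose (m+1) :=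
      Nat.choose_succ_succ' (m+l+1) m
    rw [h0, this]
    push_cast
    ring

/-- Triangle reindexing. -/
lemma tri (f : ℕ → ℕ → ℝ) : ∀ n : ℕ,
    ∑ k1 ∈ Finset.range (n+1), ∑ k2 ∈ Finset.range (n+1-k1), f k1 k2
      = ∑ m ∈ Finset.range (n+1), ∑ k2 ∈ Finset.range (m+1), f (m-k2) k2 := by
  intro n
  induction n with
  | zero => simp
  | succ n ih =>
    rw [Finset.sum_range_succ (fun m => ∑ k2 ∈ Finset.range (m+1), f (m-k2) k2) (n+1), ← ih]
    rw [Finset.sum_range_succ (fun k1 => ∑ k2 ∈ Finset.range (n+2-k1), f k1 k2) (n+1)]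
    have h1 : n+2-(n+1) = 1 := by omega
    rw [h1]
    have h2 : ∀ k1 ∈ Finset.range (n+1),
        ∑ k2 ∈ Finset.range (n+2-k1), f k1 k2
        = (∑ k2 ∈ Finset.range (n+1-k1), f k1 k2) + f k1 (n+1-k1) := by
      intro k1 hk1
      have hk : k1 ≤ n := Nat.lt_succ_iff.mp (Finset.mem_range.mp hk1)
      have : n+2-k1 = (n+1-k1)+1 := by omega
      rw [this, Finset.sum_range_succ]
    rw [Finset.sum_congr rfl h2, Finset.sum_add_distrib]
    have h3 : ∑ k2 ∈ Finset.range (n+1+1), f (n+1-k2) k2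
        = ∑ k1 ∈ Finset.range (n+1), f k1 (n+1-k1) + f (n+1) 0 := by
      rw [← Finset.sum_range_reflect (fun k2 => f (n+1-k2) k2) (n+2), Finset.sum_range_succ]
      congr 1
      · apply Finset.sum_congr rfl
        intro j hj
        have := Finset.mem_range.mp hj
        congr 1 <;> omega
      · congr 1 <;> omega
    rw [h3]
    simp only [Finset.sum_range_one]
    ring

/-- Convolution identity for `Dk`. -/
lemma Dk_conv (α β c : ℝ) (n k1 k2 : ℕ) :
    ∑ j ∈ Finset.range (n+1), (n.choose j : ℝ) * Dk α β c j k1 * Dk α β 0 (n-j) k2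
      = Dk α β c n (k1+k2) := by
  have hR : Dk α β c n (k1+k2)
      = ∑ s1 ∈ Finset.range (k1+1), ∑ s2 ∈ Finset.range (k2+1),
          ∑ j ∈ Finset.range (n+1),
            ((-1:ℝ)^k1*(-1)^s1*(k1.choose s1)) * ((-1:ℝ)^k2*(-1)^s2*(k2.choose s2)) *
              ((n.choose j : ℝ) * rf α (β*s1+c) j * rf α (β*s2+0) (n-j)) := by
    unfold Dk
    rw [fd_comp]
    unfold fd
    apply Finset.sum_congr rfl
    intro s1 _
    rw [Finset.mul_sum]
    apply Finset.sum_congr rfl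
    intro s2 _
    show (-1:ℝ)^k1*(-1)^s1*(k1.choose s1) *
        ((-1:ℝ)^k2*(-1)^s2*(k2.choose s2) * rf α (β*((s1+s2:ℕ):ℝ)+c) n) = _
    have h1 : β * ((s1+s2 : ℕ):ℝ) + c = (β*(s1:ℝ)+c) + (β*(s2:ℝ)+0) := by push_cast; ring
    rw [h1, rf_add α n (β*(s1:ℝ)+c) (β*(s2:ℝ)+0), Finset.mul_sum, Finset.mul_sum]
    apply Finset.sum_congr rfl
    intro j _
    ring
  rw [hR]
  have hL : ∀ j ∈ Finset.range (n+1),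
      (n.choose j : ℝ) * Dk α β c j k1 * Dk α β 0 (n-j) k2
      = ∑ s1 ∈ Finset.range (k1+1), ∑ s2 ∈ Finset.range (k2+1),
          ((-1:ℝ)^k1*(-1)^s1*(k1.choose s1)) * ((-1:ℝ)^k2*(-1)^s2*(k2.choose s2)) *
            ((n.choose j : ℝ) * rf α (β*s1+c) j * rf α (β*s2+0) (n-j)) := by
    intro j _
    unfold Dk fd
    rw [mul_assoc, Finset.sum_mul_sum, Finset.mul_sum]
    apply Finset.sum_congr rfl
    intro s1 _
    rw [Finset.mul_sum]
    apply Finset.sum_congr rfl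
    intro s2 _
    ring
  rw [Finset.sum_congr rfl hL]
  rw [Finset.sum_comm]
  apply Finset.sum_congr rfl
  intro s1 _
  rw [Finset.sum_comm]

lemma gfact_neg (t α : ℝ) (n : ℕ) : gfact (-t) α n = (-1:ℝ)^n * rf α t n := by
  unfold gfact rf
  calc ∏ j ∈ Finset.range n, (-t - (j:ℝ) * α)
      = ∏ j ∈ Finset.range n, (-1:ℝ) * (t + (j:ℝ) * α) :=
        Finset.prod_congr rfl (fun j _ => by ring)
    _ = (∏ _j ∈ Finset.range n, (-1:ℝ)) * ∏ j ∈ Finset.range n, (t + (j:ℝ) * α) :=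
        Finset.prod_mul_distrib
    _ = (-1:ℝ)^n * ∏ j ∈ Finset.range n, (t + (j:ℝ) * α) := by
        rw [Finset.prod_const, Finset.card_range]

lemma neg_one_pow_sub {s k : ℕ} (h : s ≤ k) : (-1:ℝ)^(k-s) = (-1)^k * (-1)^s := by
  have hs : (-1:ℝ)^(k-s) * (-1)^s = (-1)^k := by
    rw [← pow_add, Nat.sub_add_cancel h]
  have h2 : ((-1:ℝ)^s) * ((-1)^s) = 1 := by
    rw [← pow_add, ← two_mul, pow_mul]
    norm_num
  calc (-1:ℝ)^(k-s) = ((-1)^(k-s) * (-1)^s) * (-1)^s := by rw [mul_assoc, h2, mul_one]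
    _ = (-1)^k * (-1)^s := by rw [hs]

/-- `A` in terms of `Dk`. -/
lemma A_eq (lam : ℕ) (x : ℝ) (n : ℕ) (α β γ : ℝ) (hβ : β ≠ 0) :
    A lam x n α β γ
      = ∑ k ∈ Finset.range (n+1), ((k + lam - 1).choose k : ℝ) * x^k * Dk α β γ n k := by
  unfold A
  apply Finset.sum_congr rfl
  intro k _
  unfold HS
  have hinner : ∑ s ∈ Finset.range (k + 1),
      (-1:ℝ)^(k-s) * (k.choose s : ℝ) * gfact ((-β) * s + -γ) α n
      = (-1:ℝ)^n * Dk α β γ n k := by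
    unfold Dk fd
    rw [Finset.mul_sum]
    apply Finset.sum_congr rfl
    intro s hs
    have hsk : s ≤ k := Nat.lt_succ_iff.mp (Finset.mem_range.mp hs)
    have h1 : (-β) * (s:ℝ) + -γ = -(β * s + γ) := by ring
    rw [h1, gfact_neg, neg_one_pow_sub hsk]
    ring
  rw [hinner]
  have hfac : (Nat.factorial k : ℝ) ≠ 0 := Nat.cast_ne_zero.mpr (Nat.factorial_ne_zero k)
  have hβk : β^k ≠ 0 := pow_ne_zero k hβ
  have hneg : (-β)^k = (-1:ℝ)^k * β^k := by rw [neg_pow]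
  have hsc : (-1:ℝ)^(n+k) * β^k * (Nat.factorial k : ℝ) *
      (1/((-β)^k * (Nat.factorial k : ℝ))) * (-1:ℝ)^n = 1 := by
    have h2 : ((-1:ℝ)^n) * ((-1)^n) = 1 := by
      rw [← pow_add, ← two_mul, pow_mul]; norm_num
    have hy : ((-1:ℝ)^k * (β^k * (Nat.factorial k : ℝ))) ≠ 0 :=
      mul_ne_zero (pow_ne_zero _ (by norm_num)) (mul_ne_zero hβk hfac)
    calc (-1:ℝ)^(n+k) * β^k * (Nat.factorial k : ℝ) *
          (1/((-β)^k * (Nat.factorial k : ℝ))) * (-1:ℝ)^n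
        = ((-1:ℝ)^n * (-1)^n) *
          (((-1:ℝ)^k * (β^k * (Nat.factorial k : ℝ))) *
            (1/((-1:ℝ)^k * (β^k * (Nat.factorial k : ℝ))))) := by
          rw [hneg, pow_add]; ring
      _ = 1 := by rw [h2, mul_one_div_cancel hy, mul_one]
  calc ((k + lam - 1).choose k : ℝ) * (-1:ℝ)^(n+k) * β^k * (Nat.factorial k : ℝ) *
        (1/((-β)^k * (Nat.factorial k : ℝ)) * ((-1:ℝ)^n * Dk α β γ n k)) * x^k
      = (((k + lam - 1).choose k : ℝ) * x^k * Dk α β γ n k) *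
        ((-1:ℝ)^(n+k) * β^k * (Nat.factorial k : ℝ) *
          (1/((-β)^k * (Nat.factorial k : ℝ))) * (-1:ℝ)^n) := by ring
    _ = ((k + lam - 1).choose k : ℝ) * x^k * Dk α β γ n k := by rw [hsc, mul_one]

/-- Extension of the sum defining `A` to a larger range. -/
lemma A_ext (lam : ℕ) (x : ℝ) (n N : ℕ) (α β γ : ℝ) (hβ : β ≠ 0) (h : n ≤ N) :
    ∑ k ∈ Finset.range (N+1), ((k + lam - 1).choose k : ℝ) * x^k * Dk α β γ n k
      = A lam x n α β γ := by
  rw [A_eq lam x n α β γ hβ]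
  symm
  apply Finset.sum_subset
  · exact Finset.range_subset_range.mpr (by omega)
  · intro k hk hnk
    have h1 : n < k := by
      have := Finset.mem_range.mp hk
      have h2 : ¬ k < n + 1 := fun hc => hnk (Finset.mem_range.mpr hc)
      omega
    rw [Dk_vanish α β γ n k h1, mul_zero]

/-- The key convolution step. -/
lemma Sconv (α β x : ℝ) (hβ : β ≠ 0) (c : ℝ) (l n : ℕ) :
    ∑ m ∈ Finset.range (n+1), (((m+l+1).choose m : ℕ) : ℝ) * x^m * Dk α β c n m
    = ∑ j ∈ Finset.range (n+1), ((n.choose j : ℕ) : ℝ) * A 1 x j α β c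
        * A (l+1) x (n-j) α β 0 := by
  symm
  calc ∑ j ∈ Finset.range (n+1), ((n.choose j : ℕ) : ℝ) * A 1 x j α β c * A (l+1) x (n-j) α β 0
      = ∑ j ∈ Finset.range (n+1), ∑ k1 ∈ Finset.range (n+1), ∑ k2 ∈ Finset.range (n+1),
          ((n.choose j : ℕ) : ℝ) *
            (((((k1+1-1).choose k1 : ℕ):ℝ) * x^k1 * Dk α β c j k1) *
              ((((k2+(l+1)-1).choose k2 : ℕ):ℝ) * x^k2 * Dk α β 0 (n-j) k2)) := by
        apply Finset.sum_congr rfl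
        intro j hj
        have hj' : j ≤ n := Nat.lt_succ_iff.mp (Finset.mem_range.mp hj)
        rw [← A_ext 1 x j n α β c hβ hj', ← A_ext (l+1) x (n-j) n α β 0 hβ (by omega)]
        rw [mul_assoc, Finset.sum_mul_sum, Finset.mul_sum]
        apply Finset.sum_congr rfl
        intro k1 _
        rw [Finset.mul_sum]
    _ = ∑ k1 ∈ Finset.range (n+1), ∑ k2 ∈ Finset.range (n+1),
          (((k2+l).choose k2 : ℕ):ℝ) * x^(k1+k2) *
            ∑ j ∈ Finset.range (n+1), ((n.choose j : ℕ):ℝ) * Dk α β c j k1 * Dk α β 0 (n-j) k2 := by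
        rw [Finset.sum_comm]
        apply Finset.sum_congr rfl
        intro k1 _
        rw [Finset.sum_comm]
        apply Finset.sum_congr rfl
        intro k2 _
        rw [Finset.mul_sum]
        apply Finset.sum_congr rfl
        intro j _
        have e1 : k1+1-1 = k1 := by omega
        have e2 : k2+(l+1)-1 = k2+l := by omega
        rw [e1, e2, Nat.choose_self, pow_add]
        push_cast
        ring
    _ = ∑ k1 ∈ Finset.range (n+1), ∑ k2 ∈ Finset.range (n+1),
          (((k2+l).choose k2 : ℕ):ℝ) * x^(k1+k2) * Dk α β c n (k1+k2) := by
        apply Finset.sum_congr rfl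
        intro k1 _
        apply Finset.sum_congr rfl
        intro k2 _
        rw [Dk_conv]
    _ = ∑ k1 ∈ Finset.range (n+1), ∑ k2 ∈ Finset.range (n+1-k1),
          (((k2+l).choose k2 : ℕ):ℝ) * x^(k1+k2) * Dk α β c n (k1+k2) := by
        apply Finset.sum_congr rfl
        intro k1 hk1
        symm
        apply Finset.sum_subset (Finset.range_subset_range.mpr (by omega))
        intro k2 hk2 hnk
        have hlt : n < k1 + k2 := by
          have h1 := Finset.mem_range.mp hk2
          have h2 : ¬ k2 < n+1-k1 := fun hc => hnk (Finset.mem_range.mpr hc)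
          have h3 := Finset.mem_range.mp hk1
          omega
        rw [Dk_vanish _ _ _ _ _ hlt, mul_zero]
    _ = ∑ m ∈ Finset.range (n+1), ∑ k2 ∈ Finset.range (m+1),
          (((k2+l).choose k2 : ℕ):ℝ) * x^((m-k2)+k2) * Dk α β c n ((m-k2)+k2) :=
        tri (fun k1 k2 => (((k2+l).choose k2 : ℕ):ℝ) * x^(k1+k2) * Dk α β c n (k1+k2)) n
    _ = ∑ m ∈ Finset.range (n+1), (((m+l+1).choose m : ℕ) : ℝ) * x^m * Dk α β c n m := by
        apply Finset.sum_congr rfl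
        intro m _
        have hterm : ∀ k2 ∈ Finset.range (m+1),
            (((k2+l).choose k2 : ℕ):ℝ) * x^((m-k2)+k2) * Dk α β c n ((m-k2)+k2)
            = (((k2+l).choose k2 : ℕ):ℝ) * (x^m * Dk α β c n m) := by
          intro k2 hk2
          have e : (m-k2)+k2 = m := by
            have := Finset.mem_range.mp hk2; omega
          rw [e]; ring
        rw [Finset.sum_congr rfl hterm, ← Finset.sum_mul, hockey l m]
        ring

theorem stmt17 (α β γ x : ℝ) (hβ : β ≠ 0) (lam : ℕ) (hlam : 1 ≤ lam) (n : ℕ) :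
    A lam x (n + 1) α β γ =
      γ * A lam x n α β (γ + α) +
        x * lam * β *
          ∑ k ∈ Finset.range (n + 1),
            (Nat.choose n k : ℝ) * A 1 x k α β (γ + β + α) * A lam x (n - k) α β 0 := by
  obtain ⟨l, rfl⟩ : ∃ l, lam = l + 1 := ⟨lam - 1, by omega⟩
  have hstep1 : A (l+1) x (n+1) α β γ
      = γ * A (l+1) x n α β (γ+α)
        + x * ((l:ℝ)+1) * β * ∑ m ∈ Finset.range (n+1),
            (((m+l+1).choose m : ℕ) : ℝ) * x^m * Dk α β (γ+β+α) n m := by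
    rw [A_eq (l+1) x (n+1) α β γ hβ]
    have hterm : ∀ k ∈ Finset.range (n+1+1),
        ((k + (l+1) - 1).choose k : ℝ) * x^k * Dk α β γ (n+1) k
        = γ * (((k + (l+1) - 1).choose k : ℝ) * x^k * Dk α β (γ+α) n k)
          + ((k + (l+1) - 1).choose k : ℝ) * x^k *
            (if k = 0 then (0:ℝ) else β * k * Dk α β (γ+β+α) n (k-1)) := by
      intro k _
      cases k with
      | zero =>
        rw [if_pos rfl, Dk_rec_zero α β γ n]
        ring
      | succ m =>
        rw [Dk_rec α β γ n m, if_neg (Nat.succ_ne_zero m)]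
        have e : m + 1 - 1 = m := by omega
        rw [e]
        push_cast
        ring
    rw [Finset.sum_congr rfl hterm, Finset.sum_add_distrib]
    congr 1
    · rw [← Finset.mul_sum, A_ext (l+1) x n (n+1) α β (γ+α) hβ (by omega)]
    · rw [Finset.sum_range_succ' (fun k => ((k + (l+1) - 1).choose k : ℝ) * x^k *
        (if k = 0 then (0:ℝ) else β * k * Dk α β (γ+β+α) n (k-1))) (n+1)]
      have hterm2 : ∀ m ∈ Finset.range (n+1),
          (((m+1) + (l+1) - 1).choose (m+1) : ℝ) * x^(m+1) *
            (if m+1 = 0 then (0:ℝ) else β * (↑(m+1)) * Dk α β (γ+β+α) n ((m+1)-1))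
          = x * ((l:ℝ)+1) * β *
              ((((m+l+1).choose m : ℕ) : ℝ) * x^m * Dk α β (γ+β+α) n m) := by
        intro m _
        rw [if_neg (Nat.succ_ne_zero m)]
        have e1 : (m+1) + (l+1) - 1 = m+l+1 := by omega
        have e2 : (m+1) - 1 = m := by omega
        rw [e1, e2]
        have hcc : (((m+l+1).choose (m+1) : ℕ) : ℝ) * ((m:ℝ)+1)
            = (((m+l+1).choose m : ℕ) : ℝ) * ((l:ℝ)+1) := by
          have h := Nat.choose_succ_right_eq (m+l+1) m
          have h2 : m+l+1-m = l+1 := by omega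
          rw [h2] at h
          exact_mod_cast h
        push_cast
        have hx : x^(m+1) = x * x^m := by rw [pow_succ]; ring
        rw [hx]
        linear_combination (x * x^m * β * Dk α β (γ+β+α) n m) * hcc
      rw [Finset.sum_congr rfl hterm2, ← Finset.mul_sum]
      simp
  rw [hstep1, Sconv α β x hβ (γ+β+α) l n]
  push_cast
  ring
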